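/- With $K = \frac{q}{2}\binom{k-t+1}{1}_q\binom{k-t}{1}_q$, $F = \binom{k-t+1}{m+1}_q \frac{\prod_{i=0}^{m}(q^{m+1}-q^i)}{(m+1)!(q-1)^{m+1}}$, $D = \frac{1}{(m+1)!} q^{\frac{(m+1)(m+4)}{2}}\prod_{i=1}^{m+1}\binom{k-t-i}{1}_q$, and $c = \frac{q^{2m+3}}{2}\binom{k-m-t}{1}_q\binom{k-m-t-1}{1}_q$, the identity $K \cdot D = F \cdot c$ holds. -/

import Mathlib

/-- The Gaussian (q-)binomial coefficient, as a rational number. -/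
def gbinomQ (q a b : ℕ) : ℚ :=
  ∏ i ∈ Finset.range b, (((q : ℚ) ^ (a - i) - 1) / ((q : ℚ) ^ (b - i) - 1))


open Finset in
lemma gbinom_one' (q a : ℕ) : gbinomQ q a 1 = ((q:ℚ)^a - 1)/((q:ℚ) - 1) := by
  simp [gbinomQ]

open Finset in
/-- With `K = (q/2)[k-t+1,1]_q[k-t,1]_q`,
`F = [k-t+1, m+1]_q ∏_{i=0}^m (q^{m+1}-q^i) / ((m+1)!(q-1)^{m+1})`,
`D = (1/(m+1)!) q^{(m+1)(m+4)/2} ∏_{i=1}^{m+1}[k-t-i,1]_q`, and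
`c = (q^{2m+3}/2)[k-m-t,1]_q[k-m-t-1,1]_q`, the identity `K·D = F·c` holds. -/
theorem stmt_9 (q k m t : ℕ) (hq : IsPrimePow q) (hm : 1 ≤ m) (ht : 1 ≤ t)
    (hk : m + t + 2 ≤ k)
    (K F D c : ℚ)
    (hK : K = (q : ℚ) / 2 * (gbinomQ q (k - t + 1) 1 * gbinomQ q (k - t) 1))
    (hF : F = gbinomQ q (k - t + 1) (m + 1) *
      ((∏ i ∈ Finset.range (m + 1), ((q : ℚ) ^ (m + 1) - (q : ℚ) ^ i)) /
        ((Nat.factorial (m + 1) : ℚ) * ((q : ℚ) - 1) ^ (m + 1))))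
    (hD : D = (1 / (Nat.factorial (m + 1) : ℚ)) *
      (q : ℚ) ^ ((m + 1) * (m + 4) / 2) *
      ∏ i ∈ Finset.range (m + 1), gbinomQ q (k - t - (i + 1)) 1)
    (hc : c = (q : ℚ) ^ (2 * m + 3) / 2 *
      (gbinomQ q (k - m - t) 1 * gbinomQ q (k - m - t - 1) 1)) :
    K * D = F * c := by
  subst hK hF hD hc
  have hq2 : 2 ≤ q := hq.two_le
  obtain ⟨s, rfl⟩ : ∃ s, k = (m + 2 + s) + t := ⟨k - t - m - 2, by omega⟩
  have hQ2 : (2:ℚ) ≤ (q:ℚ) := by exact_mod_cast hq2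
  have hQ1 : (1:ℚ) < (q:ℚ) := by linarith
  have hQne : (q:ℚ) ≠ 0 := by linarith
  have hQ1ne : (q:ℚ) - 1 ≠ 0 := by intro h; rw [sub_eq_zero] at h; linarith
  have hpow : ∀ j : ℕ, 1 ≤ j → (q:ℚ) ^ j - 1 ≠ 0 := by
    intro j hj h
    rw [sub_eq_zero] at h
    have h2 : (q:ℚ) ≤ (q:ℚ) ^ j := le_self_pow₀ (by linarith) (by omega)
    rw [h] at h2; linarith
  have hfact : ((Nat.factorial (m+1) : ℚ)) ≠ 0 := by
    exact_mod_cast (Nat.factorial_pos (m+1)).ne'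
  -- nat arithmetic rewrites
  have e0 : m + 2 + s + t - t = m + 2 + s := by omega
  have e1 : m + 2 + s + t - m - t = s + 2 := by omega
  rw [e0, e1]
  have e2 : s + 2 - 1 = s + 1 := by omega
  rw [e2]
  rw [gbinom_one', gbinom_one', gbinom_one', gbinom_one']
  -- abbreviation
  set Q : ℚ := (q:ℚ) with hQdef
  set g : ℕ → ℚ := fun j => Q ^ (s + 1 + j) - 1 with hg
  -- rewrite D's product
  have hD : (∏ i ∈ range (m + 1), gbinomQ q (m + 2 + s - (i + 1)) 1)
      = (∏ i ∈ range (m + 1), g i) / (Q - 1) ^ (m + 1) := by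
    simp only [gbinom_one']
    rw [prod_div_distrib, prod_const, card_range]
    congr 1
    rw [← prod_range_reflect (fun i => g i) (m+1)]
    apply prod_congr rfl
    intro i hi
    rw [mem_range] at hi
    have : m + 2 + s - (i + 1) = s + 1 + (m + 1 - 1 - i) := by omega
    rw [this]
  -- gbinom (m+1) numerator/denominator
  have hFnum : gbinomQ q (m + 2 + s + 1) (m + 1)
      = (∏ i ∈ range (m + 1), g (i + 2)) / (∏ i ∈ range (m + 1), (Q ^ (m + 1 - i) - 1)) := by
    rw [gbinomQ, prod_div_distrib]
    congr 1
    rw [← prod_range_reflect (fun i => g (i + 2)) (m+1)]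
    apply prod_congr rfl
    intro i hi
    rw [mem_range] at hi
    have : m + 2 + s + 1 - i = s + 1 + (m + 1 - 1 - i + 2) := by omega
    rw [this]
  have hL1 : (∏ i ∈ range (m + 1), (Q ^ (m + 1) - Q ^ i))
      = Q ^ (m * (m + 1) / 2) * ∏ i ∈ range (m + 1), (Q ^ (m + 1 - i) - 1) := by
    have : ∀ i ∈ range (m+1), Q ^ (m + 1) - Q ^ i = Q ^ i * (Q ^ (m + 1 - i) - 1) := by
      intro i hi
      rw [mem_range] at hi
      rw [mul_sub, mul_one, ← pow_add]
      congr 2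
      omega
    rw [prod_congr rfl this, prod_mul_distrib, prod_pow_eq_pow_sum, sum_range_id]
    congr 2
    rw [Nat.add_sub_cancel, Nat.mul_comm]
  -- main product identity
  have hprod : (∏ i ∈ range (m + 1), g (i + 2)) * (g 1 * g 0)
      = (g (m + 2) * g (m + 1)) * ∏ i ∈ range (m + 1), g i := by
    have h1 : ∏ i ∈ range (m + 3), g i
        = ((∏ i ∈ range (m + 1), g i) * g (m + 1)) * g (m + 2) := by
      rw [prod_range_succ, prod_range_succ]
    have h2 : ∏ i ∈ range (m + 3), g i
        = ((∏ i ∈ range (m + 1), g (i + 2)) * g 1) * g 0 := by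
      rw [prod_range_succ', prod_range_succ']
    rw [← mul_assoc, ← h2, h1]; ring
  have hgvals : g (m + 2) = Q ^ (m + 2 + s + 1) - 1 ∧ g (m + 1) = Q ^ (m + 2 + s) - 1
      ∧ g 1 = Q ^ (s + 2) - 1 ∧ g 0 = Q ^ (s + 1) - 1 := by
    refine ⟨by simp only [hg]; try ring, by simp only [hg]; try ring,
      by simp only [hg]; try ring, by simp only [hg]; try ring⟩
  obtain ⟨hg2, hg1, hgb, hga⟩ := hgvals
  rw [hD, hFnum, hL1, ← hg2, ← hg1, ← hgb, ← hga]
  have hden : (∏ i ∈ range (m + 1), (Q ^ (m + 1 - i) - 1)) ≠ 0 := by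
    apply prod_ne_zero_iff.mpr
    intro i hi
    rw [mem_range] at hi
    exact hpow (m + 1 - i) (by omega)
  have hexp : Q * Q ^ ((m + 1) * (m + 4) / 2) = Q ^ (m * (m + 1) / 2) * Q ^ (2 * m + 3) := by
    rw [← pow_succ', ← pow_add]
    congr 1
    have h4 : (m+1)*(m+4) = m*(m+1) + (2*m+2)*2 := by ring
    rw [h4, Nat.add_mul_div_right _ _ (by norm_num : 0 < 2)]
    generalize m*(m+1) = a
    omega
  field_simp
  linear_combination
      ((g (m+2) * g (m+1) * ∏ i ∈ Finset.range (m+1), g i) * hexp -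
        (Q^(m*(m+1)/2) * Q^(2*m+3)) * hprod)
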